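/- Let (J, R, Q, B) define a port-Hamiltonian system with A = (J−R)Q, C = BᵀQ. Let P̂_c = P̂_cᵀ solve Aᵀ P̂_c + P̂_c A − P̂_c B Bᵀ P̂_c + Cᵀ C = 0 and set P̂_f = Q⁻¹, A_{P̂_c} = A − B Bᵀ P̂_c, and ℒ = (Iₙ + P̂_f P̂_c)⁻¹ P̂_f (assuming Iₙ + P̂_f P̂_c is invertible). Then ℒ is symmetric and satisfies the Lyapunov inequality A_{P̂_c} ℒ + ℒ A_{P̂_c}ᵀ + B Bᵀ ⪯ 0; more precisely, (Iₙ + P̂_f P̂_c) (A_{P̂_c} ℒ + ℒ A_{P̂_c}ᵀ + B Bᵀ) (Iₙ + P̂_c P̂_f) = −2R. -/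

import Mathlib

open Matrix

/-- `ℒ = (I + P̂_f P̂_c)⁻¹ P̂_f` with `P̂_f = Q⁻¹` is symmetric and satisfies the Lyapunov
inequality `A_{P̂_c} ℒ + ℒ A_{P̂_c}ᵀ + B Bᵀ ⪯ 0`; more precisely, conjugating by
`I + P̂_f P̂_c` gives exactly `−2R`. -/
theorem stmt10 {n m : ℕ} (J R Q : Matrix (Fin n) (Fin n) ℝ) (B : Matrix (Fin n) (Fin m) ℝ)
    (A : Matrix (Fin n) (Fin n) ℝ) (C : Matrix (Fin m) (Fin n) ℝ)
    (Pc : Matrix (Fin n) (Fin n) ℝ)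
    (hJ : Jᵀ = -J) (hR : R.PosSemidef) (hQ : Q.PosDef)
    (hA : A = (J - R) * Q) (hC : C = Bᵀ * Q)
    (hPc : Pcᵀ = Pc)
    (hRic : Aᵀ * Pc + Pc * A - Pc * B * Bᵀ * Pc + Cᵀ * C = 0)
    (hInv : IsUnit (1 + Q⁻¹ * Pc)) :
    (let Pf : Matrix (Fin n) (Fin n) ℝ := Q⁻¹
     let L : Matrix (Fin n) (Fin n) ℝ := (1 + Pf * Pc)⁻¹ * Pf
     let APc : Matrix (Fin n) (Fin n) ℝ := A - B * Bᵀ * Pc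
     Lᵀ = L ∧
     (-(APc * L + L * APcᵀ + B * Bᵀ)).PosSemidef ∧
     (1 + Pf * Pc) * (APc * L + L * APcᵀ + B * Bᵀ) * (1 + Pc * Pf) = -((2 : ℝ) • R)) := by
  intro Pf L APc
  -- basic facts
  have hQdet : IsUnit Q.det := (Matrix.isUnit_iff_isUnit_det Q).mp hQ.isUnit
  have hQT : Qᵀ = Q := by
    have := hQ.isHermitian.eq
    rwa [Matrix.conjTranspose_eq_transpose_of_trivial] at this
  have hRT : Rᵀ = R := by
    have := hR.isHermitian.eq
    rwa [Matrix.conjTranspose_eq_transpose_of_trivial] at this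
  have hQPf : Q * Pf = 1 := Matrix.mul_nonsing_inv Q hQdet
  have hPfQ : Pf * Q = 1 := Matrix.nonsing_inv_mul Q hQdet
  have hPfT : Pfᵀ = Pf := by
    show Q⁻¹ᵀ = Q⁻¹
    rw [Matrix.transpose_nonsing_inv, hQT]
  set S : Matrix (Fin n) (Fin n) ℝ := 1 + Pf * Pc with hS
  have hST : Sᵀ = 1 + Pc * Pf := by
    rw [hS, transpose_add, transpose_one, transpose_mul, hPfT, hPc]
  have hSdet : IsUnit S.det := (Matrix.isUnit_iff_isUnit_det S).mp hInv
  have hSTdet : IsUnit Sᵀ.det := by rwa [Matrix.det_transpose]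
  have hSinv : S⁻¹ * S = 1 := Matrix.nonsing_inv_mul S hSdet
  have hSinv' : S * S⁻¹ = 1 := Matrix.mul_nonsing_inv S hSdet
  have hSTinv' : Sᵀ * (Sᵀ)⁻¹ = 1 := Matrix.mul_nonsing_inv _ hSTdet
  -- commutation
  have hcomm : Pf * Sᵀ = S * Pf := by rw [hST, hS]; noncomm_ring
  have hSL : S * L = Pf := by
    show S * (S⁻¹ * Pf) = Pf
    rw [← mul_assoc, hSinv', one_mul]
  have hLST : L * Sᵀ = Pf := by
    show S⁻¹ * Pf * Sᵀ = Pf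
    rw [mul_assoc, hcomm, ← mul_assoc, hSinv, one_mul]
  -- symmetry of L
  have hLT : Lᵀ = L := by
    have h1 : S * Lᵀ = Pf := by
      show S * (S⁻¹ * Pf)ᵀ = Pf
      rw [transpose_mul, hPfT, Matrix.transpose_nonsing_inv, ← mul_assoc, ← hcomm,
        mul_assoc, hSTinv', mul_one]
    exact hInv.mul_left_cancel (h1.trans hSL.symm)
  -- auxiliary products
  have hAPf : A * Pf = J - R := by rw [hA, mul_assoc, hQPf, mul_one]
  have hAT : Aᵀ = Q * (-J - R) := by
    rw [hA, transpose_mul, hQT, transpose_sub, hJ, hRT, neg_sub_left, neg_add, ← sub_eq_add_neg]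
  have hPfAT : Pf * Aᵀ = -J - R := by rw [hAT, ← mul_assoc, hPfQ, one_mul]
  have hCTC : Cᵀ * C = Q * (B * Bᵀ) * Q := by
    rw [hC, transpose_mul, hQT, transpose_transpose]
    simp only [Matrix.mul_assoc]
  -- sandwiched Riccati equation
  have key : (-J - R) * (Pc * Pf) + (Pf * Pc) * (J - R)
      - Pf * Pc * (B * Bᵀ) * (Pc * Pf) + B * Bᵀ = 0 := by
    have h0 : Pf * (Aᵀ * Pc + Pc * A - Pc * B * Bᵀ * Pc + Cᵀ * C) * Pf = 0 := by
      rw [hRic]; simp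
    calc (-J - R) * (Pc * Pf) + (Pf * Pc) * (J - R)
          - Pf * Pc * (B * Bᵀ) * (Pc * Pf) + B * Bᵀ
        = (Pf * Aᵀ) * (Pc * Pf) + (Pf * Pc) * (A * Pf)
          - Pf * Pc * (B * Bᵀ) * (Pc * Pf) + (Pf * Q) * (B * Bᵀ) * (Q * Pf) := by
          rw [hPfAT, hAPf, hPfQ, hQPf, one_mul, mul_one]
      _ = Pf * (Aᵀ * Pc + Pc * A - Pc * B * Bᵀ * Pc + Cᵀ * C) * Pf := by
          rw [hCTC, Matrix.mul_assoc Pc B Bᵀ]; noncomm_ring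
      _ = 0 := h0
  -- APc expansion
  have e2 : APc * Pf = (J - R) - B * Bᵀ * (Pc * Pf) := by
    show (A - B * Bᵀ * Pc) * Pf = _
    rw [sub_mul, hAPf, mul_assoc]
  have e3 : Pf * APcᵀ = (-J - R) - (Pf * Pc) * (B * Bᵀ) := by
    show Pf * (A - B * Bᵀ * Pc)ᵀ = _
    rw [transpose_sub, transpose_mul, transpose_mul, transpose_transpose, hPc, mul_sub, hPfAT]
    noncomm_ring
  -- the main identity
  have main : S * (APc * L + L * APcᵀ + B * Bᵀ) * Sᵀ = -((2 : ℝ) • R) := by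
    calc S * (APc * L + L * APcᵀ + B * Bᵀ) * Sᵀ
        = S * APc * (L * Sᵀ) + S * L * (APcᵀ * Sᵀ) + S * (B * Bᵀ) * Sᵀ := by noncomm_ring
      _ = S * (APc * Pf) + (Pf * APcᵀ) * Sᵀ + S * (B * Bᵀ) * Sᵀ := by
          rw [hLST, hSL]; noncomm_ring
      _ = (1 + Pf * Pc) * ((J - R) - B * Bᵀ * (Pc * Pf))
          + ((-J - R) - (Pf * Pc) * (B * Bᵀ)) * (1 + Pc * Pf)
          + (1 + Pf * Pc) * (B * Bᵀ) * (1 + Pc * Pf) := by rw [e2, e3, hS, hST]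
      _ = -(R + R) + ((-J - R) * (Pc * Pf) + (Pf * Pc) * (J - R)
          - Pf * Pc * (B * Bᵀ) * (Pc * Pf) + B * Bᵀ) := by noncomm_ring
      _ = -(R + R) := by rw [key, add_zero]
      _ = -((2 : ℝ) • R) := by rw [two_smul]
  refine ⟨hLT, ?_, by rw [← hST]; exact main⟩
  -- positive semidefiniteness
  have hX : -(APc * L + L * APcᵀ + B * Bᵀ) = S⁻¹ * ((2 : ℝ) • R) * (S⁻¹)ᵀ := by
    have h1 : S * (-(APc * L + L * APcᵀ + B * Bᵀ)) * Sᵀ = (2 : ℝ) • R := by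
      rw [show S * (-(APc * L + L * APcᵀ + B * Bᵀ)) * Sᵀ
          = -(S * (APc * L + L * APcᵀ + B * Bᵀ) * Sᵀ) by noncomm_ring, main, neg_neg]
    have := congrArg (fun M => S⁻¹ * M * (Sᵀ)⁻¹) h1
    beta_reduce at this
    rw [Matrix.transpose_nonsing_inv, ← this]
    rw [show S⁻¹ * (S * -(APc * L + L * APcᵀ + B * Bᵀ) * Sᵀ) * (Sᵀ)⁻¹
        = (S⁻¹ * S) * -(APc * L + L * APcᵀ + B * Bᵀ) * (Sᵀ * (Sᵀ)⁻¹) by noncomm_ring,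
      hSinv, hSTinv', one_mul, mul_one]
  rw [hX]
  have hR2 : ((2 : ℝ) • R).PosSemidef := by
    rw [two_smul]; exact hR.add hR
  have := hR2.mul_mul_conjTranspose_same S⁻¹
  rwa [Matrix.conjTranspose_eq_transpose_of_trivial] at this
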